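/- For the Tribonacci word, ρ(n) = 3 if and only if all factors of length n are 1-balanced pairwise, i.e., | |v|ₐ - |w|ₐ | ≤ 1 for all factors v, w of length n and all letters a ∈ {0,1,2}. -/

import Mathlib

/-- The Tribonacci morphism τ: 0↦01, 1↦02, 2↦0, extended to words. -/
def tau : List (Fin 3) → List (Fin 3) :=
  fun w => w.flatMap (fun a => if a = 0 then [0, 1] else if a = 1 then [0, 2] else [0])

/-- The Tribonacci word, the fixed point of τ starting with 0.
Since τⁿ(0) is a prefix of τⁿ⁺¹(0) and |τ^(n+1)(0)| > n, this is well defined. -/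
def trib : ℕ → Fin 3 := fun n => (tau^[n + 1] [0]).getD n 0

/-- `u` is a (finite, contiguous) factor of the Tribonacci word. -/
def IsFactor (u : List (Fin 3)) : Prop :=
  ∃ i : ℕ, u = (List.range u.length).map (fun j => trib (i + j))

noncomputable def rho (n : ℕ) : ℕ :=
  Set.ncard {v : Fin 3 → ℕ | ∃ u : List (Fin 3), IsFactor u ∧ u.length = n ∧
    ∀ a : Fin 3, u.count a = v a}

def W (k : ℕ) : List (Fin 3) := tau^[k] [0]

lemma tau_append (a b : List (Fin 3)) : tau (a ++ b) = tau a ++ tau b :=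
  List.flatMap_append

lemma tau_iter_append (k : ℕ) (a b : List (Fin 3)) :
    tau^[k] (a ++ b) = tau^[k] a ++ tau^[k] b := by
  induction k generalizing a b with
  | zero => simp
  | succ k ih => simp [Function.iterate_succ_apply, tau_append, ih]

lemma tau_len_ge (u : List (Fin 3)) : u.length ≤ (tau u).length := by
  induction u with
  | nil => simp [tau]
  | cons a l ih =>
    have : tau (a :: l) = tau [a] ++ tau l := tau_append [a] l
    rw [this, List.length_append]
    have h1 : 1 ≤ (tau [a]).length := by
      fin_cases a <;> simp [tau]
    simp only [List.length_cons]
    omega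

lemma tau_ne_nil {u : List (Fin 3)} (h : u ≠ []) : tau u ≠ [] := by
  intro hc
  have := tau_len_ge u
  rw [hc] at this
  simp at this
  exact h (List.length_eq_zero_iff.mp (Nat.le_zero.mp (this ▸ le_refl _) ))

lemma W_succ (k : ℕ) : W (k + 1) = W k ++ tau^[k] [1] := by
  have : W (k+1) = tau^[k] (tau [0]) := Function.iterate_succ_apply tau k [0]
  rw [this]
  have : tau [0] = [0] ++ [1] := by decide
  rw [this, tau_iter_append]
  rfl

lemma W_prefix (k : ℕ) : W k <+: W (k + 1) := ⟨tau^[k] [1], (W_succ k).symm⟩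

lemma W_prefix_le {k m : ℕ} (h : k ≤ m) : W k <+: W m := by
  induction m with
  | zero => simpa [Nat.le_zero.mp h]
  | succ m ih =>
    rcases Nat.lt_or_ge k (m+1) with h' | h'
    · exact (ih (by omega)).trans (W_prefix m)
    · have : k = m + 1 := by omega
      simp [this]

lemma W_length (k : ℕ) : k + 1 ≤ (W k).length := by
  induction k with
  | zero => simp [W]
  | succ k ih =>
    rw [W_succ, List.length_append]
    have h1 : tau^[k] [1] ≠ [] := by
      clear ih
      induction k with
      | zero => simp
      | succ k ih2 =>
        rw [Function.iterate_succ_apply']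
        exact tau_ne_nil ih2
    have := List.length_pos_iff.mpr h1
    omega

lemma trib_eq_W {k n : ℕ} (h : n < (W k).length) : trib n = (W k)[n] := by
  have hlen : n < (W (n+1)).length := by have := W_length (n+1); omega
  have hbase : trib n = (W (n+1))[n] := by
    show (W (n+1)).getD n 0 = _
    exact List.getD_eq_getElem _ _ hlen
  rcases le_or_gt k (n+1) with h' | h'
  · have hp := W_prefix_le h'
    rw [hbase]
    exact (List.IsPrefix.getElem hp h).symm
  · have hp := W_prefix_le (le_of_lt h')
    rw [hbase]
    exact List.IsPrefix.getElem hp hlen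

lemma isFactor_iff (u : List (Fin 3)) : IsFactor u ↔ ∃ k, u <:+: W k := by
  constructor
  · rintro ⟨i, hi⟩
    refine ⟨i + u.length, ?_⟩
    have hlen : i + u.length ≤ (W (i + u.length)).length := by
      have := W_length (i + u.length); omega
    have : u = ((W (i + u.length)).drop i).take u.length := by
      apply List.ext_getElem
      · rw [hi]; simp; omega
      · intro j h1 h2
        have hj : j < u.length := by rw [hi] at h1; simpa using h1
        have hij : i + j < (W (i + u.length)).length := by omega
        have he : u[j] = trib (i + j) := by
          rw [List.getElem_of_eq hi h1]
          simp
        rw [he, trib_eq_W hij]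
        simp
    conv_lhs => rw [this]
    exact ((List.take_prefix _ _).isInfix).trans ((List.drop_suffix _ _).isInfix)
  · rintro ⟨k, s, t, hst⟩
    refine ⟨s.length, ?_⟩
    apply List.ext_getElem
    · simp
    · intro j h1 h2
      have hj : s.length + j < (W k).length := by
        rw [← hst]; simp; omega
      have h3 : s.length + j < (s ++ u ++ t).length := by rw [hst]; exact hj
      have key : (W k)[s.length + j] = u[j] := by
        rw [List.getElem_of_eq hst.symm hj]
        simp [List.getElem_append, h1]
      rw [← key, ← trib_eq_W hj]
      simp

lemma isFactor_of_infix {u v : List (Fin 3)} (h : IsFactor u) (hv : v <:+: u) :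
    IsFactor v := by
  rw [isFactor_iff] at h ⊢
  obtain ⟨k, hk⟩ := h
  exact ⟨k, hv.trans hk⟩

lemma isFactor_tau {u : List (Fin 3)} (h : IsFactor u) : IsFactor (tau u) := by
  rw [isFactor_iff] at h ⊢
  obtain ⟨k, s, t, hst⟩ := h
  refine ⟨k + 1, tau s, tau t, ?_⟩
  have : W (k+1) = tau (W k) := Function.iterate_succ_apply' tau k [0]
  rw [this, ← hst, tau_append, tau_append]

lemma isFactor_extend {u : List (Fin 3)} (h : IsFactor u) :
    ∃ x : Fin 3, IsFactor (u ++ [x]) := by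
  obtain ⟨i, hi⟩ := h
  refine ⟨trib (i + u.length), i, ?_⟩
  simp only [List.length_append, List.length_singleton]
  rw [List.range_succ, List.map_append]
  have h2 : List.map (fun j => trib (i + j)) [u.length] = [trib (i + u.length)] := by simp
  rw [h2, ← hi]

def FullRS (u : List (Fin 3)) : Prop := ∀ a : Fin 3, IsFactor (u ++ [a])

lemma fullRS_nil : FullRS [] := by
  intro a
  rw [isFactor_iff]
  refine ⟨2, ?_⟩
  have hW2 : W 2 = [0, 1, 0, 2] := by decide
  rw [hW2]
  fin_cases a
  · exact ⟨[], [1,0,2], rfl⟩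
  · exact ⟨[0], [0,2], rfl⟩
  · exact ⟨[0,1,0], [], rfl⟩

lemma fullRS_step {u : List (Fin 3)} (h : FullRS u) : FullRS (tau u ++ [0]) := by
  intro a
  fin_cases a
  · -- followed by 0 : use u ++ [2] extended
    obtain ⟨x, hx⟩ := isFactor_extend (h 2)
    have hf := isFactor_tau hx
    have heq : tau ((u ++ [2]) ++ [x]) = tau u ++ [0] ++ tau [x] := by
      rw [tau_append, tau_append]
      congr 1
    rw [heq] at hf
    apply isFactor_of_infix hf
    have hx0 : ∃ r, tau [x] = 0 :: r := by
      fin_cases x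
      · exact ⟨[1], rfl⟩
      · exact ⟨[2], rfl⟩
      · exact ⟨[], rfl⟩
    obtain ⟨r, hr⟩ := hx0
    rw [hr]
    refine List.IsPrefix.isInfix ⟨r, ?_⟩
    simp
  · -- followed by 1 : τ(u0) = τ(u) ++ [0,1]
    have hf := isFactor_tau (h 0)
    have heq : tau (u ++ [0]) = (tau u ++ [0] ++ [1]) := by
      rw [tau_append]; simp [tau]
    rw [heq] at hf
    exact hf
  · have hf := isFactor_tau (h 1)
    have heq : tau (u ++ [1]) = (tau u ++ [0] ++ [2]) := by
      rw [tau_append]; simp [tau]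
    rw [heq] at hf
    exact hf

lemma fullRS_suffix {u v : List (Fin 3)} (h : FullRS u) (hv : v <:+ u) : FullRS v := by
  intro a
  apply isFactor_of_infix (h a)
  refine List.IsSuffix.isInfix ?_
  obtain ⟨r, hr⟩ := hv
  exact ⟨r, by rw [← List.append_assoc, hr]⟩

lemma exists_fullRS_ge (m : ℕ) : ∃ u, FullRS u ∧ m ≤ u.length := by
  induction m with
  | zero => exact ⟨[], fullRS_nil, by simp⟩
  | succ m ih =>
    obtain ⟨u, hu, hlen⟩ := ih
    refine ⟨tau u ++ [0], fullRS_step hu, ?_⟩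
    have := tau_len_ge u
    simp only [List.length_append, List.length_singleton]
    omega

lemma exists_fullRS (m : ℕ) : ∃ u, FullRS u ∧ u.length = m := by
  obtain ⟨u, hu, hlen⟩ := exists_fullRS_ge m
  refine ⟨u.drop (u.length - m), fullRS_suffix hu (List.drop_suffix _ _), ?_⟩
  simp
  omega

lemma count_sum (l : List (Fin 3)) :
    l.count 0 + l.count 1 + l.count 2 = l.length := by
  induction l with
  | nil => simp
  | cons a l ih => fin_cases a <;> simp [List.count_cons] <;> omega

theorem tribonacci_rho_three_iff_balanced (n : ℕ) (hn : 1 ≤ n) :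
    rho n = 3 ↔
      ∀ v w : List (Fin 3), IsFactor v → IsFactor w →
        v.length = n → w.length = n →
        ∀ a : Fin 3, |(v.count a : ℤ) - (w.count a : ℤ)| ≤ 1 := by
  obtain ⟨u, hu, hlen⟩ := exists_fullRS (n - 1)
  set S : Set (Fin 3 → ℕ) :=
    {v | ∃ w : List (Fin 3), IsFactor w ∧ w.length = n ∧ ∀ a : Fin 3, w.count a = v a}
    with hSdef
  have hrhoS : rho n = S.ncard := rfl
  set vb : Fin 3 → Fin 3 → ℕ := fun b a => u.count a + if a = b then 1 else 0 with hvb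
  have hcount : ∀ b a : Fin 3, (u ++ [b]).count a = vb b a := by
    intro b a
    by_cases hab : a = b
    · subst hab; simp [hvb, List.count_append]
    · simp [hvb, List.count_append, hab, List.count_cons, Ne.symm hab]
  have hvbS : ∀ b, vb b ∈ S := by
    intro b
    refine ⟨u ++ [b], hu b, ?_, fun a => hcount b a⟩
    simp only [List.length_append, List.length_singleton, hlen]
    omega
  have hne : ∀ b b' : Fin 3, b ≠ b' → vb b ≠ vb b' := by
    intro b b' hbb' h
    have := congrFun h b
    simp [hvb, hbb'] at this
  have htric : ({vb 0, vb 1, vb 2} : Set (Fin 3 → ℕ)).ncard = 3 := by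
    rw [Set.ncard_eq_three]
    exact ⟨vb 0, vb 1, vb 2, hne 0 1 (by decide), hne 0 2 (by decide),
      hne 1 2 (by decide), rfl⟩
  have hsub : ({vb 0, vb 1, vb 2} : Set (Fin 3 → ℕ)) ⊆ S := by
    rintro v (rfl | rfl | rfl)
    · exact hvbS 0
    · exact hvbS 1
    · exact hvbS 2
  have hfin : S.Finite := by
    apply Set.Finite.subset (Set.Finite.pi (fun _ : Fin 3 => Set.finite_Iic n))
    rintro v ⟨w, hw, hwl, hwc⟩ a _
    exact le_trans (le_of_eq (hwc a).symm) (le_trans List.count_le_length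
      (le_of_eq hwl))
  constructor
  · -- rho = 3 → balanced
    intro hrho v w hv hw hvn hwn a
    have htri : ({vb 0, vb 1, vb 2} : Set (Fin 3 → ℕ)) = S :=
      Set.eq_of_subset_of_ncard_le hsub (by rw [← hrhoS, hrho, htric]) hfin
    have hvS : (fun a => v.count a) ∈ S := ⟨v, hv, hvn, fun a => rfl⟩
    have hwS : (fun a => w.count a) ∈ S := ⟨w, hw, hwn, fun a => rfl⟩
    rw [← htri] at hvS hwS
    have hvx : ∃ b, (fun a => v.count a) = vb b := by
      rcases hvS with h | h | h
      exacts [⟨0, h⟩, ⟨1, h⟩, ⟨2, h⟩]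
    have hwx : ∃ b, (fun a => w.count a) = vb b := by
      rcases hwS with h | h | h
      exacts [⟨0, h⟩, ⟨1, h⟩, ⟨2, h⟩]
    obtain ⟨b, hb⟩ := hvx
    obtain ⟨b', hb'⟩ := hwx
    have h1 : v.count a = vb b a := congrFun hb a
    have h2 : w.count a = vb b' a := congrFun hb' a
    rw [h1, h2, hvb]
    simp only
    rw [abs_le]
    constructor <;> push_cast <;> split_ifs <;> omega
  · -- balanced → rho = 3
    intro hbal
    have hSeq : S = ({vb 0, vb 1, vb 2} : Set (Fin 3 → ℕ)) := by
      apply Set.Subset.antisymm _ hsub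
      rintro v ⟨w, hw, hwl, hwc⟩
      have hb : ∀ a b : Fin 3,
          |(w.count a : ℤ) - ((u ++ [b]).count a : ℤ)| ≤ 1 := by
        intro a b
        exact hbal w (u ++ [b]) hw (hu b) hwl (by simp only [List.length_append, List.length_singleton, hlen]; omega) a
      have hbounds : ∀ a : Fin 3, u.count a ≤ w.count a ∧ w.count a ≤ u.count a + 1 := by
        intro a
        have hA := hb a a
        have hB := hb a (a + 1)
        rw [hcount a a] at hA
        rw [hcount (a + 1) a] at hB
        have hne1 : a ≠ a + 1 := by fin_cases a <;> decide
        simp [hvb, hne1] at hA hB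
        rw [abs_le] at hA hB
        push_cast at hA hB
        omega
      have hsum : w.count 0 + w.count 1 + w.count 2 = n := by
        rw [count_sum, hwl]
      have hsumu : u.count 0 + u.count 1 + u.count 2 = n - 1 := by
        rw [count_sum, hlen]
      have h0 := hbounds 0
      have h1 := hbounds 1
      have h2 := hbounds 2
      have key : (w.count 0 = u.count 0 + 1 ∧ w.count 1 = u.count 1 ∧ w.count 2 = u.count 2)
          ∨ (w.count 0 = u.count 0 ∧ w.count 1 = u.count 1 + 1 ∧ w.count 2 = u.count 2)
          ∨ (w.count 0 = u.count 0 ∧ w.count 1 = u.count 1 ∧ w.count 2 = u.count 2 + 1) := by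
        omega
      have hv : ∀ a, v a = w.count a := fun a => (hwc a).symm
      rcases key with ⟨k0, k1, k2⟩ | ⟨k0, k1, k2⟩ | ⟨k0, k1, k2⟩
      · left
        funext a
        fin_cases a <;> simp [hv, hvb, k0, k1, k2]
      · right; left
        funext a
        fin_cases a <;> simp [hv, hvb, k0, k1, k2]
      · right; right
        funext a
        fin_cases a <;> simp [hv, hvb, k0, k1, k2]
    rw [hrhoS, hSeq, htric]
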